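/- arXiv:1709.03589 — 2 statements merged into one kernel-verified Lean document; each statement's English description precedes it below -/
import Mathlib

section
/- Let V be an n-dimensional real vector space, let (F,G,H) be a transverse triple of complete flags in V, and let i,j,k ≥ 1 be integers with i+j+k = n. Then for every real number t there exists an invertible linear automorphism u of V such that for all 0 ≤ m ≤ n: u(F^(m)) = F^(m), u(G^(m)) = exp(t·A^{i,j,k}_{F,G,H})(G^(m)), and u(exp(t·A^{j,k,i}_{G,H,F})(H^(m))) = H^(m). -/
/-- `F` is a complete flag in an `n`-dimensional real vector space:
`F 0 ⊆ F 1 ⊆ ⋯ ⊆ F n` with `dim (F l) = l` for `0 ≤ l ≤ n`. -/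
def IsFlag (n : ℕ) {V : Type*} [AddCommGroup V] [Module ℝ V]
    (F : ℕ → Submodule ℝ V) : Prop :=
  (∀ l, l < n → F l ≤ F (l + 1)) ∧ ∀ l, l ≤ n → Module.finrank ℝ (F l) = l

/-- A triple of flags is transverse if `F a + G b + H c = V` whenever `a + b + c = n`. -/
def TransverseTriple (n : ℕ) {V : Type*} [AddCommGroup V] [Module ℝ V]
    (F G H : ℕ → Submodule ℝ V) : Prop :=
  ∀ a b c : ℕ, a + b + c = n → F a ⊔ G b ⊔ H c = ⊤

/-- A pair of flags is transverse if `F a + G (n - a) = V` for all `0 ≤ a ≤ n`. -/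
def TransversePair (n : ℕ) {V : Type*} [AddCommGroup V] [Module ℝ V]
    (F G : ℕ → Submodule ℝ V) : Prop :=
  ∀ a, a ≤ n → F a ⊔ G (n - a) = ⊤

/-- `A` is the `(i,j,k)`-eruption endomorphism of the triple `(F,G,H)`: it acts as the
scalar `(n - i)/n` on `F i` and as the scalar `-i/n` on `G j + H k`. -/
def IsEruption (n i j k : ℕ) {V : Type*} [AddCommGroup V] [Module ℝ V]
    (F G H : ℕ → Submodule ℝ V) (A : Module.End ℝ V) : Prop :=
  (∀ v ∈ F i, A v = (((n : ℝ) - (i : ℝ)) / (n : ℝ)) • v) ∧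
  (∀ v ∈ G j ⊔ H k, A v = (-(i : ℝ) / (n : ℝ)) • v)

/-- `A` is the `(i, n-i)`-shearing endomorphism of the pair `(F,G)`: it acts as the
scalar `(n - i)/n` on `F i` and as the scalar `-i/n` on `G (n - i)`. -/
def IsShearing (n i : ℕ) {V : Type*} [AddCommGroup V] [Module ℝ V]
    (F G : ℕ → Submodule ℝ V) (A : Module.End ℝ V) : Prop :=
  (∀ v ∈ F i, A v = (((n : ℝ) - (i : ℝ)) / (n : ℝ)) • v) ∧
  (∀ v ∈ G (n - i), A v = (-(i : ℝ) / (n : ℝ)) • v)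

/-- The exponential of an endomorphism of a finite-dimensional real vector space. -/
noncomputable def expEnd {V : Type*} [NormedAddCommGroup V] [NormedSpace ℝ V]
    [FiniteDimensional ℝ V] (A : Module.End ℝ V) : Module.End ℝ V :=
  (NormedSpace.exp (LinearMap.toContinuousLinearMap A)).toLinearMap

section Aux
open Nat
set_option linter.unusedSectionVars false

variable {V : Type*} [NormedAddCommGroup V] [NormedSpace ℝ V] [FiniteDimensional ℝ V]

/-- exp applied to an eigenvector. -/
lemma expEnd_apply_eigen (A : Module.End ℝ V) (c : ℝ) (v : V) (hv : A v = c • v) :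
    expEnd A v = Real.exp c • v := by
  set T := LinearMap.toContinuousLinearMap A with hT
  have hTv : T v = c • v := hv
  have hpow : ∀ m : ℕ, (T ^ m) v = c ^ m • v := by
    intro m
    induction m with
    | zero => simp
    | succ m ih =>
      rw [pow_succ, ContinuousLinearMap.mul_apply, hTv, map_smul, ih, smul_smul]
      congr 1
      ring_nf
  have hsum : Summable fun m : ℕ => ((m ! : ℝ)⁻¹ : ℝ) • T ^ m :=
    NormedSpace.expSeries_summable' (𝕂 := ℝ) T
  have h1 : expEnd A v = ∑' m : ℕ, (((m ! : ℝ)⁻¹ : ℝ) • T ^ m) v := by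
    show (NormedSpace.exp T) v = _
    rw [NormedSpace.exp_eq_tsum ℝ]
    exact (ContinuousLinearMap.apply ℝ V v).map_tsum hsum
  have h2 : ∀ m : ℕ, (((m ! : ℝ)⁻¹ : ℝ) • T ^ m) v = ((m ! : ℝ)⁻¹ * c ^ m) • v := by
    intro m
    rw [ContinuousLinearMap.smul_apply, hpow, smul_smul]
  rw [h1]
  simp_rw [h2]
  have hs : Summable fun m : ℕ => ((m ! : ℝ))⁻¹ * c ^ m := by
    simpa [smul_eq_mul] using NormedSpace.expSeries_summable' (𝕂 := ℝ) (c : ℝ)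
  rw [Summable.tsum_smul_const hs]
  congr 1
  rw [Real.exp_eq_exp_ℝ, NormedSpace.exp_eq_tsum ℝ]
  simp [smul_eq_mul]

lemma expEnd_comp_neg (A : Module.End ℝ V) :
    expEnd A ∘ₗ expEnd (-A) = LinearMap.id := by
  have h : NormedSpace.exp (LinearMap.toContinuousLinearMap A) *
      NormedSpace.exp (-(LinearMap.toContinuousLinearMap A)) = 1 := by
    letI : NormedAlgebra ℚ (V →L[ℝ] V) := NormedAlgebra.restrictScalars ℚ ℝ _
    rw [← NormedSpace.exp_add_of_commute (Commute.neg_right (Commute.refl _)),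
      add_neg_cancel, NormedSpace.exp_zero]
  ext v
  have h2 := congrFun (congrArg (fun T : V →L[ℝ] V => (T : V → V)) h) v
  simp only [ContinuousLinearMap.mul_apply, ContinuousLinearMap.one_apply] at h2
  simpa [expEnd, map_neg] using h2

/-- exp as a linear equivalence. -/
noncomputable def expEquiv (A : Module.End ℝ V) : V ≃ₗ[ℝ] V :=
  LinearEquiv.ofLinear (expEnd A) (expEnd (-A)) (expEnd_comp_neg A)
    (by simpa using expEnd_comp_neg (-A))

lemma expEquiv_coe (A : Module.End ℝ V) : (expEquiv A : V →ₗ[ℝ] V) = expEnd A := rfl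

/-- An endomorphism acting as a nonzero scalar on `S` maps any `W ≤ S` onto itself. -/
lemma map_eq_of_scalar {B : Module.End ℝ V} {S W : Submodule ℝ V} {c : ℝ} (hc : c ≠ 0)
    (hB : ∀ v ∈ S, B v = c • v) (hWS : W ≤ S) : Submodule.map B W = W := by
  apply le_antisymm
  · rintro _ ⟨v, hv, rfl⟩
    rw [hB v (hWS hv)]
    exact W.smul_mem c hv
  · intro v hv
    refine ⟨c⁻¹ • v, W.smul_mem _ hv, ?_⟩
    rw [hB _ (hWS (W.smul_mem _ hv)), smul_smul, mul_inv_cancel₀ hc, one_smul]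

lemma flag_mono {n : ℕ} {F : ℕ → Submodule ℝ V} (hF : IsFlag n F) :
    ∀ {a b : ℕ}, a ≤ b → b ≤ n → F a ≤ F b := by
  intro a b hab hbn
  induction b with
  | zero => simp [Nat.le_zero.mp hab]
  | succ b ih =>
    rcases Nat.lt_or_ge a (b + 1) with h | h
    · exact le_trans (ih (Nat.lt_succ_iff.mp h) (le_trans (Nat.le_succ b) hbn))
        (hF.1 b (by omega))
    · have : a = b + 1 := le_antisymm hab h
      subst this; exact le_rfl

lemma compl_facts {n p : ℕ} (hV : Module.finrank ℝ V = n)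
    {P S : Submodule ℝ V} (hP : Module.finrank ℝ P = p)
    (htop : P ⊔ S = ⊤) (hSle : Module.finrank ℝ S + p ≤ n) :
    Module.finrank ℝ S = n - p ∧ P ⊓ S = ⊥ := by
  have h1 := Submodule.finrank_sup_add_finrank_inf_eq P S
  rw [htop, finrank_top, hV, hP] at h1
  have h2 : Module.finrank ℝ ↥(P ⊓ S) = 0 := by omega
  exact ⟨by omega, Submodule.finrank_eq_zero.mp h2⟩

lemma decomp_sup {n p m : ℕ} (hV : Module.finrank ℝ V = n) {P S W : Submodule ℝ V}
    (hP : Module.finrank ℝ P = p) (hS : Module.finrank ℝ S = n - p) (hpn : p ≤ n)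
    (hPS : P ⊓ S = ⊥) (hPW : P ≤ W) (hW : Module.finrank ℝ W = m) :
    W = P ⊔ (W ⊓ S) := by
  have hle : P ⊔ (W ⊓ S) ≤ W := sup_le hPW inf_le_left
  have h1 := Submodule.finrank_sup_add_finrank_inf_eq P (W ⊓ S)
  have h2 : P ⊓ (W ⊓ S) = ⊥ :=
    le_bot_iff.mp ((inf_le_inf_left P inf_le_right).trans hPS.le)
  rw [h2, finrank_bot, add_zero, hP] at h1
  have h3 := Submodule.finrank_sup_add_finrank_inf_eq W S
  rw [hW, hS] at h3
  have h4 : Module.finrank ℝ ↥(W ⊔ S) ≤ n := hV ▸ Submodule.finrank_le _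
  have h5 : Module.finrank ℝ W ≤ Module.finrank ℝ ↥(P ⊔ (W ⊓ S)) := by
    rw [hW]; omega
  exact (Submodule.eq_of_le_of_finrank_le hle h5).symm

end Aux

theorem statement2 (n : ℕ) (V : Type*) [NormedAddCommGroup V] [NormedSpace ℝ V]
    [FiniteDimensional ℝ V] (hV : Module.finrank ℝ V = n)
    (F G H : ℕ → Submodule ℝ V) (hF : IsFlag n F) (hG : IsFlag n G) (hH : IsFlag n H)
    (hFGH : TransverseTriple n F G H)
    (i j k : ℕ) (hi : 1 ≤ i) (hj : 1 ≤ j) (hk : 1 ≤ k) (hijk : i + j + k = n)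
    (A A' : Module.End ℝ V) (hA : IsEruption n i j k F G H A)
    (hA' : IsEruption n j k i G H F A') (t : ℝ) :
    ∃ u : V ≃ₗ[ℝ] V, ∀ m, m ≤ n →
      Submodule.map (u : V →ₗ[ℝ] V) (F m) = F m ∧
      Submodule.map (u : V →ₗ[ℝ] V) (G m) = Submodule.map (expEnd (t • A)) (G m) ∧
      Submodule.map (u : V →ₗ[ℝ] V) (Submodule.map (expEnd (t • A')) (H m)) = H m := by
  have hin : i ≤ n := by omega
  have hjn : j ≤ n := by omega
  have hkn : k ≤ n := by omega
  -- eigenvalue facts for B₁ = expEnd (t • A)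
  have hB₁F : ∀ v ∈ F i, expEnd (t • A) v = Real.exp (t * (((n : ℝ) - i) / n)) • v :=
    fun v hv => expEnd_apply_eigen _ _ _
      (by rw [LinearMap.smul_apply, hA.1 v hv, smul_smul])
  have hB₁S : ∀ v ∈ G j ⊔ H k, expEnd (t • A) v = Real.exp (t * (-(i : ℝ) / n)) • v :=
    fun v hv => expEnd_apply_eigen _ _ _
      (by rw [LinearMap.smul_apply, hA.2 v hv, smul_smul])
  have hB₂G : ∀ v ∈ G j, expEnd (t • A') v = Real.exp (t * (((n : ℝ) - j) / n)) • v :=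
    fun v hv => expEnd_apply_eigen _ _ _
      (by rw [LinearMap.smul_apply, hA'.1 v hv, smul_smul])
  have hB₂HF : ∀ v ∈ H k ⊔ F i, expEnd (t • A') v = Real.exp (t * (-(j : ℝ) / n)) • v :=
    fun v hv => expEnd_apply_eigen _ _ _
      (by rw [LinearMap.smul_apply, hA'.2 v hv, smul_smul])
  -- scalar action of the composite C = B₁ ∘ B₂
  set eC : ℝ := Real.exp (t * (-(j : ℝ) / n) + t * (((n : ℝ) - i) / n)) with heC
  have hCS' : ∀ v ∈ F i ⊔ G j,
      (expEnd (t • A) ∘ₗ expEnd (t • A')) v = eC • v := by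
    intro v hv
    obtain ⟨x, hx, y, hy, rfl⟩ := Submodule.mem_sup.mp hv
    have hgx : x ∈ H k ⊔ F i := Submodule.mem_sup_right hx
    have hgy : y ∈ G j ⊔ H k := Submodule.mem_sup_left hy
    rw [LinearMap.comp_apply, map_add, hB₂HF x hgx, hB₂G y hy, map_add, map_smul, map_smul,
      hB₁F x hx, hB₁S y hgy, smul_smul, smul_smul, smul_add]
    congr 1
    · rw [heC, ← Real.exp_add]
    · rw [heC, ← Real.exp_add]
      congr 1
      ring_nf
  have hCH : ∀ v ∈ H k, (expEnd (t • A) ∘ₗ expEnd (t • A')) v =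
      Real.exp (t * (-(j : ℝ) / n) + t * (-(i : ℝ) / n)) • v := by
    intro v hv
    rw [LinearMap.comp_apply, hB₂HF v (Submodule.mem_sup_left hv), map_smul,
      hB₁S v (Submodule.mem_sup_right hv), smul_smul, ← Real.exp_add]
  -- dimension facts
  have hrGH : Module.finrank ℝ ↥(G j ⊔ H k) + i ≤ n := by
    have h := Submodule.finrank_sup_add_finrank_inf_eq (G j) (H k)
    rw [hG.2 j hjn, hH.2 k hkn] at h
    omega
  have hrFG : Module.finrank ℝ ↥(F i ⊔ G j) + k ≤ n := by
    have h := Submodule.finrank_sup_add_finrank_inf_eq (F i) (G j)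
    rw [hF.2 i hin, hG.2 j hjn] at h
    omega
  have hStop : F i ⊔ (G j ⊔ H k) = ⊤ := by
    rw [← sup_assoc]; exact hFGH i j k hijk
  have hS'top : H k ⊔ (F i ⊔ G j) = ⊤ := by
    rw [sup_comm]; exact hFGH i j k hijk
  obtain ⟨hS1, hS2⟩ := compl_facts hV (hF.2 i hin) hStop hrGH
  obtain ⟨hS'1, hS'2⟩ := compl_facts hV (hH.2 k hkn) hS'top hrFG
  -- the maps of the flags
  have hmapF : ∀ m, m ≤ n → Submodule.map (expEnd (t • A)) (F m) = F m := by
    intro m hm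
    rcases le_total m i with h | h
    · exact map_eq_of_scalar (Real.exp_ne_zero _) hB₁F (flag_mono hF h hin)
    · have hd := decomp_sup hV (hF.2 i hin) hS1 hin hS2 (flag_mono hF h hm) (hF.2 m hm)
      conv_lhs => rw [hd]
      rw [Submodule.map_sup,
        map_eq_of_scalar (Real.exp_ne_zero _) hB₁F le_rfl,
        map_eq_of_scalar (Real.exp_ne_zero _) hB₁S inf_le_right]
      exact hd.symm
  have hmapH : ∀ m, m ≤ n →
      Submodule.map (expEnd (t • A) ∘ₗ expEnd (t • A')) (H m) = H m := by
    intro m hm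
    rcases le_total m k with h | h
    · exact map_eq_of_scalar (Real.exp_ne_zero _) hCH (flag_mono hH h hkn)
    · have hd := decomp_sup hV (hH.2 k hkn) hS'1 hkn hS'2 (flag_mono hH h hm) (hH.2 m hm)
      conv_lhs => rw [hd]
      rw [Submodule.map_sup,
        map_eq_of_scalar (Real.exp_ne_zero _) hCH le_rfl,
        map_eq_of_scalar (Real.exp_ne_zero _) hCS' inf_le_right]
      exact hd.symm
  refine ⟨expEquiv (t • A), fun m hm => ?_⟩
  have hcoe : ∀ p : Submodule ℝ V,
      Submodule.map (expEquiv (t • A) : V →ₗ[ℝ] V) p = Submodule.map (expEnd (t • A)) p := fun p => rfl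
  refine ⟨?_, ?_, ?_⟩
  · rw [hcoe]; exact hmapF m hm
  · rw [hcoe]
  · rw [hcoe, ← Submodule.map_comp]
    exact hmapH m hm
end

section
/- Let V be an n-dimensional real vector space and let (F,G,H) be a transverse triple of complete flags in V. Then the triples (G,H,F) and (F,H,G) are also transverse, and for all integers i,j,k ≥ 1 with i+j+k = n: T_{i,j,k}(F,G,H) = T_{j,k,i}(G,H,F) and T_{i,j,k}(F,G,H) · T_{i,k,j}(F,H,G) = 1. -/
/-- `f` (whose values `f 0, …, f (n-1)` matter) is a basis adapted to the flag `F`: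
`F l` is the span of `f 0, …, f (l-1)` for all `0 ≤ l ≤ n`. -/
def Adapted (n : ℕ) {V : Type*} [AddCommGroup V] [Module ℝ V]
    (F : ℕ → Submodule ℝ V) (f : ℕ → V) : Prop :=
  ∀ l, l ≤ n → F l = Submodule.span ℝ (f '' Set.Iio l)

/-- `F^(a) ∧ G^(b) ∧ H^(c) := ω (f 0, …, f (a-1), g 0, …, g (b-1), h 0, …, h (c-1))`,
for `a + b + c = n`. -/
noncomputable def wedge (n : ℕ) {V : Type*} [AddCommGroup V] [Module ℝ V]
    (ω : AlternatingMap ℝ V ℝ (Fin n)) (f g h : ℕ → V) (a b c : ℕ) : ℝ :=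
  ω fun l : Fin n =>
    if (l : ℕ) < a then f (l : ℕ)
    else if (l : ℕ) < a + b then g ((l : ℕ) - a)
    else h ((l : ℕ) - a - b)

/-- The triple ratio `T_{i,j,k}(F,G,H)` computed with adapted bases `f, g, h` of the
flags `F, G, H` and the nonzero alternating `n`-form `ω`. -/
noncomputable def tripleRatio (n : ℕ) {V : Type*} [AddCommGroup V] [Module ℝ V]
    (ω : AlternatingMap ℝ V ℝ (Fin n)) (f g h : ℕ → V) (i j k : ℕ) : ℝ :=
  (wedge n ω f g h (i + 1) j (k - 1) / wedge n ω f g h (i + 1) (j - 1) k) *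
  (wedge n ω f g h (i - 1) (j + 1) k / wedge n ω f g h i (j + 1) (k - 1)) *
  (wedge n ω f g h i (j - 1) (k + 1) / wedge n ω f g h (i - 1) j (k + 1))

lemma pow_finRotate_val {m : ℕ} (a : ℕ) (l : Fin (m + 1)) :
    ((((finRotate (m + 1)) ^ a) l : Fin (m + 1)) : ℕ) = ((l : ℕ) + a) % (m + 1) := by
  induction a generalizing l with
  | zero => simp [Nat.mod_eq_of_lt l.isLt]
  | succ t ih =>
    rw [pow_succ', Equiv.Perm.mul_apply, finRotate_succ_apply, Fin.val_add, Fin.val_one', ih]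
    conv_rhs => rw [show (l : ℕ) + (t + 1) = ((l : ℕ) + t) + 1 by ring, ← Nat.mod_add_mod]
    conv_rhs => rw [Nat.add_mod]
    conv_lhs => rw [Nat.add_mod]
    simp

lemma units_neg_one_pow_smul (e : ℕ) (x : ℝ) : ((-1 : ℤˣ) ^ e • x) = (-1 : ℝ) ^ e * x := by
  rcases Nat.even_or_odd e with he | he
  · rw [he.neg_one_pow, he.neg_one_pow, one_smul, one_mul]
  · rw [he.neg_one_pow, he.neg_one_pow, Units.neg_smul, one_smul, neg_one_mul]

lemma wedge_rot (n : ℕ) {V : Type*} [AddCommGroup V] [Module ℝ V]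
    (ω : AlternatingMap ℝ V ℝ (Fin n)) (f g h : ℕ → V) (a b c : ℕ)
    (hn : a + b + c = n) (hpos : 0 < n) :
    wedge n ω g h f b c a = (-1 : ℝ) ^ ((n - 1) * a) * wedge n ω f g h a b c := by
  obtain ⟨m, rfl⟩ : ∃ m, n = m + 1 := ⟨n - 1, by omega⟩
  set σ : Equiv.Perm (Fin (m + 1)) := (finRotate (m + 1)) ^ a with hσ
  have hval : ∀ l : Fin (m + 1), ((σ l : Fin (m+1)) : ℕ) = ((l : ℕ) + a) % (m + 1) :=
    fun l => pow_finRotate_val a l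
  have hcomp : (fun l : Fin (m + 1) =>
        if (l : ℕ) < b then g (l : ℕ)
        else if (l : ℕ) < b + c then h ((l : ℕ) - b)
        else f ((l : ℕ) - b - c))
      = (fun l : Fin (m + 1) =>
        if (l : ℕ) < a then f (l : ℕ)
        else if (l : ℕ) < a + b then g ((l : ℕ) - a)
        else h ((l : ℕ) - a - b)) ∘ σ := by
    funext l
    simp only [Function.comp_apply]
    have hl := l.isLt
    have hv := hval l
    rcases lt_or_ge (l : ℕ) b with h1 | h1
    · have hs : ((σ l : Fin (m+1)) : ℕ) = (l : ℕ) + a := by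
        rw [hv, Nat.mod_eq_of_lt (by omega)]
      rw [if_pos h1, if_neg (by omega), if_pos (by omega), hs]
      congr 1
      omega
    · rcases lt_or_ge (l : ℕ) (b + c) with h2 | h2
      · have hs : ((σ l : Fin (m+1)) : ℕ) = (l : ℕ) + a := by
          rw [hv, Nat.mod_eq_of_lt (by omega)]
        rw [if_neg (by omega), if_pos h2, if_neg (by omega), if_neg (by omega), hs]
        congr 1
        omega
      · have hs : ((σ l : Fin (m+1)) : ℕ) = (l : ℕ) + a - (m + 1) := by
          rw [hv, Nat.mod_eq_sub_mod (by omega), Nat.mod_eq_of_lt (by omega)]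
        rw [if_neg (by omega), if_neg (by omega), if_pos (by omega), hs]
        congr 1
        omega
  have hsign : Equiv.Perm.sign σ = (-1 : ℤˣ) ^ (m * a) := by
    rw [hσ, map_pow, sign_finRotate, ← pow_mul, Nat.add_sub_cancel]
  unfold wedge
  rw [hcomp, AlternatingMap.map_perm, hsign, units_neg_one_pow_smul,
    show m + 1 - 1 = m from rfl]

lemma wedge_swap (n : ℕ) {V : Type*} [AddCommGroup V] [Module ℝ V]
    (ω : AlternatingMap ℝ V ℝ (Fin n)) (f g h : ℕ → V) (a b c : ℕ)
    (hn : a + b + c = n) (hbc : 0 < b + c) :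
    wedge n ω f h g a c b = (-1 : ℝ) ^ ((b + c - 1) * b) * wedge n ω f g h a b c := by
  obtain ⟨m, hm⟩ : ∃ m, b + c = m + 1 := ⟨b + c - 1, by omega⟩
  have hn' : n = a + (m + 1) := by omega
  set e : Fin n ≃ Fin a ⊕ Fin (m + 1) := (finCongr hn').trans finSumFinEquiv.symm with he
  set ρ : Equiv.Perm (Fin (m + 1)) := (finRotate (m + 1)) ^ b with hρ
  set τ : Equiv.Perm (Fin n) := e.permCongr.symm (Equiv.sumCongr 1 ρ) with hτ
  have heval : ∀ x : Fin n, ((τ x : Fin n) : ℕ) =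
      if (x : ℕ) < a then (x : ℕ) else a + (((x : ℕ) - a) + b) % (m + 1) := by
    intro x
    rw [hτ, Equiv.permCongr_symm, Equiv.permCongr_apply, he]
    simp only [Equiv.symm_symm, Equiv.symm_trans_apply, Equiv.trans_apply]
    rcases lt_or_ge (x : ℕ) a with hx | hx
    · have : finSumFinEquiv.symm ((finCongr hn') x) = Sum.inl ⟨(x : ℕ), hx⟩ := by
        rw [Equiv.symm_apply_eq]
        simp [Fin.ext_iff]
      rw [this]
      simp [hx, Fin.ext_iff]
    · have : finSumFinEquiv.symm ((finCongr hn') x) = Sum.inr ⟨(x : ℕ) - a, by omega⟩ := by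
        rw [Equiv.symm_apply_eq]
        simp only [finSumFinEquiv_apply_right, Fin.ext_iff, finCongr_apply, Fin.coe_cast,
          Fin.natAdd_mk]
        omega
      rw [this, if_neg (not_lt.mpr hx)]
      simp only [Equiv.sumCongr_apply, Sum.map_inr, finSumFinEquiv_apply_right, finCongr_symm,
        finCongr_apply, Fin.coe_cast, Fin.natAdd_mk, hρ]
      rw [Fin.coe_natAdd, pow_finRotate_val]
  have hcomp : (fun l : Fin n =>
        if (l : ℕ) < a then f (l : ℕ)
        else if (l : ℕ) < a + c then h ((l : ℕ) - a)
        else g ((l : ℕ) - a - c))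
      = (fun l : Fin n =>
        if (l : ℕ) < a then f (l : ℕ)
        else if (l : ℕ) < a + b then g ((l : ℕ) - a)
        else h ((l : ℕ) - a - b)) ∘ τ := by
    funext l
    simp only [Function.comp_apply]
    have hl : (l : ℕ) < n := l.isLt
    have hv := heval l
    rcases lt_or_ge (l : ℕ) a with h1 | h1
    · rw [if_pos h1]
      rw [if_pos h1] at hv
      rw [if_pos (show ((τ l : Fin n) : ℕ) < a by omega), hv]
    · rw [if_neg (not_lt.mpr h1)] at hv
      rw [if_neg (not_lt.mpr h1)]
      rcases lt_or_ge (l : ℕ) (a + c) with h2 | h2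
      · have hmod : (((l : ℕ) - a) + b) % (m + 1) = ((l : ℕ) - a) + b := by
          rw [Nat.mod_eq_of_lt (by omega)]
        rw [hmod] at hv
        rw [if_pos h2, if_neg (by omega), if_neg (by omega), hv]
        congr 1
        omega
      · have hmod : (((l : ℕ) - a) + b) % (m + 1) = (l : ℕ) - a + b - (m + 1) := by
          rw [Nat.mod_eq_sub_mod (by omega), Nat.mod_eq_of_lt (by omega)]
        rw [hmod] at hv
        rw [if_neg (by omega), if_neg (by omega), if_pos (by omega), hv]
        congr 1
        omega
  have hsign : Equiv.Perm.sign τ = (-1 : ℤˣ) ^ (m * b) := by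
    rw [hτ, Equiv.permCongr_symm, Equiv.Perm.sign_permCongr, Equiv.Perm.sign_sumCongr,
      map_one, one_mul, hρ, map_pow, sign_finRotate, ← pow_mul, Nat.add_sub_cancel]
  unfold wedge
  rw [hcomp, AlternatingMap.map_perm, hsign, units_neg_one_pow_smul,
    show b + c - 1 = m by omega]

lemma wedge_ne_zero (n : ℕ) {V : Type*} [AddCommGroup V] [Module ℝ V] [FiniteDimensional ℝ V]
    (hV : Module.finrank ℝ V = n)
    (F G H : ℕ → Submodule ℝ V) (hFGH : TransverseTriple n F G H)
    (ω : AlternatingMap ℝ V ℝ (Fin n)) (hω : ω ≠ 0)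
    (f g h : ℕ → V) (hf : Adapted n F f) (hg : Adapted n G g) (hh : Adapted n H h)
    (a b c : ℕ) (hn : a + b + c = n) :
    wedge n ω f g h a b c ≠ 0 := by
  set v : Fin n → V := fun l : Fin n =>
    if (l : ℕ) < a then f (l : ℕ)
    else if (l : ℕ) < a + b then g ((l : ℕ) - a)
    else h ((l : ℕ) - a - b) with hv
  have hsub : f '' Set.Iio a ∪ (g '' Set.Iio b ∪ h '' Set.Iio c) ⊆ Set.range v := by
    rintro x (⟨t, ht, rfl⟩ | ⟨t, ht, rfl⟩ | ⟨t, ht, rfl⟩) <;>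
      simp only [Set.mem_Iio] at ht
    · refine ⟨⟨t, by omega⟩, ?_⟩
      simp only [hv]
      rw [if_pos ht]
    · refine ⟨⟨a + t, by omega⟩, ?_⟩
      simp only [hv]
      rw [if_neg (by omega), if_pos (by omega)]
      congr 1
      omega
    · refine ⟨⟨a + b + t, by omega⟩, ?_⟩
      simp only [hv]
      rw [if_neg (by omega), if_neg (by omega)]
      congr 1
      omega
  have hspan : ⊤ ≤ Submodule.span ℝ (Set.range v) := by
    rw [← hFGH a b c hn, hf a (by omega), hg b (by omega), hh c (by omega), sup_assoc,
      ← Submodule.span_union, ← Submodule.span_union]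
    exact Submodule.span_mono hsub
  set B := basisOfTopLeSpanOfCardEqFinrank v hspan (by simp [hV]) with hB
  have hBv : ⇑B = v := coe_basisOfTopLeSpanOfCardEqFinrank v hspan (by simp [hV])
  have : ω B ≠ 0 := by
    intro h0
    apply hω
    have := AlternatingMap.eq_smul_basis_det B ω
    rw [h0, zero_smul] at this
    exact this
  have hwv : wedge n ω f g h a b c = ω v := rfl
  rw [hwv, ← hBv]
  exact this

theorem statement13 (n : ℕ) (V : Type*) [AddCommGroup V] [Module ℝ V] [FiniteDimensional ℝ V]
    (hV : Module.finrank ℝ V = n)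
    (F G H : ℕ → Submodule ℝ V) (hF : IsFlag n F) (hG : IsFlag n G) (hH : IsFlag n H)
    (hFGH : TransverseTriple n F G H)
    (ω : AlternatingMap ℝ V ℝ (Fin n)) (hω : ω ≠ 0)
    (f g h : ℕ → V) (hf : Adapted n F f) (hg : Adapted n G g) (hh : Adapted n H h) :
    TransverseTriple n G H F ∧ TransverseTriple n F H G ∧
    ∀ i j k : ℕ, 1 ≤ i → 1 ≤ j → 1 ≤ k → i + j + k = n →
      tripleRatio n ω f g h i j k = tripleRatio n ω g h f j k i ∧
      tripleRatio n ω f g h i j k * tripleRatio n ω f h g i k j = 1 := by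
  refine ⟨?_, ?_, ?_⟩
  · intro a b c habc
    have hh' := hFGH c a b (by omega)
    rw [sup_comm, ← sup_assoc]
    exact hh'
  · intro a b c habc
    have hh' := hFGH a c b (by omega)
    rw [sup_assoc, sup_comm (H b), ← sup_assoc]
    exact hh'
  · intro i j k hi hj hk hn
    obtain ⟨i', rfl⟩ : ∃ i', i = i' + 1 := ⟨i - 1, by omega⟩
    obtain ⟨j', rfl⟩ : ∃ j', j = j' + 1 := ⟨j - 1, by omega⟩
    obtain ⟨k', rfl⟩ : ∃ k', k = k' + 1 := ⟨k - 1, by omega⟩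
    have hW : ∀ a b c : ℕ, a + b + c = n → wedge n ω f g h a b c ≠ 0 := fun a b c habc =>
      wedge_ne_zero n hV F G H hFGH ω hω f g h hf hg hh a b c habc
    have w1 := hW (i' + 1 + 1) (j' + 1) k' (by omega)
    have w2 := hW (i' + 1 + 1) j' (k' + 1) (by omega)
    have w3 := hW i' (j' + 1 + 1) (k' + 1) (by omega)
    have w4 := hW (i' + 1) (j' + 1 + 1) k' (by omega)
    have w5 := hW (i' + 1) j' (k' + 1 + 1) (by omega)
    have w6 := hW i' (j' + 1) (k' + 1 + 1) (by omega)
    unfold tripleRatio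
    simp only [Nat.add_sub_cancel]
    constructor
    · rw [wedge_rot n ω f g h i' (j' + 1 + 1) (k' + 1) (by omega) (by omega),
        wedge_rot n ω f g h (i' + 1) (j' + 1 + 1) k' (by omega) (by omega),
        wedge_rot n ω f g h (i' + 1) j' (k' + 1 + 1) (by omega) (by omega),
        wedge_rot n ω f g h i' (j' + 1) (k' + 1 + 1) (by omega) (by omega),
        wedge_rot n ω f g h (i' + 1 + 1) (j' + 1) k' (by omega) (by omega),
        wedge_rot n ω f g h (i' + 1 + 1) j' (k' + 1) (by omega) (by omega)]
      have hs : (-1 : ℝ) ^ ((n - 1) * i') ≠ 0 := pow_ne_zero _ (by norm_num)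
      have hs' : (-1 : ℝ) ^ ((n - 1) * (i' + 1)) ≠ 0 := pow_ne_zero _ (by norm_num)
      have hs'' : (-1 : ℝ) ^ ((n - 1) * (i' + 1 + 1)) ≠ 0 := pow_ne_zero _ (by norm_num)
      field_simp
    · rw [wedge_swap n ω f g h (i' + 1 + 1) j' (k' + 1) (by omega) (by omega),
        wedge_swap n ω f g h (i' + 1 + 1) (j' + 1) k' (by omega) (by omega),
        wedge_swap n ω f g h i' (j' + 1) (k' + 1 + 1) (by omega) (by omega),
        wedge_swap n ω f g h (i' + 1) j' (k' + 1 + 1) (by omega) (by omega),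
        wedge_swap n ω f g h (i' + 1) (j' + 1 + 1) k' (by omega) (by omega),
        wedge_swap n ω f g h i' (j' + 1 + 1) (k' + 1) (by omega) (by omega)]
      rw [show j' + (k' + 1) - 1 = j' + k' from by omega,
        show j' + 1 + k' - 1 = j' + k' from by omega,
        show j' + 1 + (k' + 1 + 1) - 1 = j' + k' + 2 from by omega,
        show j' + (k' + 1 + 1) - 1 = j' + k' + 1 from by omega,
        show j' + 1 + 1 + k' - 1 = j' + k' + 1 from by omega,
        show j' + 1 + 1 + (k' + 1) - 1 = j' + k' + 2 from by omega]
      have hsq : ((-1 : ℝ)) ^ ((j' + k') * j') * (-1 : ℝ) ^ ((j' + k' + 2) * (j' + 1)) *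
          (-1 : ℝ) ^ ((j' + k' + 1) * (j' + 1 + 1)) =
          (-1 : ℝ) ^ ((j' + k') * (j' + 1)) * (-1 : ℝ) ^ ((j' + k' + 1) * j') *
          (-1 : ℝ) ^ ((j' + k' + 2) * (j' + 1 + 1)) := by
        rw [← pow_add, ← pow_add, ← pow_add, ← pow_add]
        congr 1
        ring
      have ha : (-1 : ℝ) ^ ((j' + k') * (j' + 1)) ≠ 0 := pow_ne_zero _ (by norm_num)
      have hb : (-1 : ℝ) ^ ((j' + k' + 1) * j') ≠ 0 := pow_ne_zero _ (by norm_num)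
      have hc : (-1 : ℝ) ^ ((j' + k' + 2) * (j' + 1 + 1)) ≠ 0 := pow_ne_zero _ (by norm_num)
      field_simp
      linear_combination (wedge n ω f g h (i' + 1 + 1) (j' + 1) k' *
        wedge n ω f g h (i' + 1 + 1) j' (k' + 1) * wedge n ω f g h i' (j' + 1 + 1) (k' + 1) *
        wedge n ω f g h (i' + 1) (j' + 1 + 1) k' * wedge n ω f g h (i' + 1) j' (k' + 1 + 1) *
        wedge n ω f g h i' (j' + 1) (k' + 1 + 1)) * hsq
end
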